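/- Let s_1, …, s_m be pairwise distinct states of Q. There is a cycle ({s_1}, …, {s_m}) →_G^+ ({s_1}, …, {s_m}) in the graph G if and only if there is a configuration c with Set(c) = {s_1, …, s_m} and c →+ c in the broadcast network. -/

import Mathlib

/-- Communication operations over a message domain `D`: send `!a` or receive `?a`. -/
inductive Op (D : Type) where
  | send : D → Op D
  | recv : D → Op D
  deriving DecidableEq

/-- One transition `c →_a c'` of the broadcast network with sender `i` and receivers `R`:
the sender takes a send transition on `a`, every receiver takes a receive transition on `a`,
and all other clients stay idle. -/
def StepAt {D Q : Type} (δ : Set (Q × Op D × Q)) (a : D) {k : ℕ}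
    (c c' : Fin k → Q) (i : Fin k) (R : Set (Fin k)) : Prop :=
  i ∉ R ∧ (c i, Op.send a, c' i) ∈ δ ∧
    (∀ j ∈ R, (c j, Op.recv a, c' j) ∈ δ) ∧
    (∀ j, j ∉ R → j ≠ i → c' j = c j)

/-- A transition `c → c'` of the broadcast network (for some message, sender and receivers). -/
def Step {D Q : Type} (δ : Set (Q × Op D × Q)) {k : ℕ} (c c' : Fin k → Q) : Prop :=
  ∃ (a : D) (i : Fin k) (R : Set (Fin k)), StepAt δ a c c' i R

/-- `post_{?a}(S)`: successors of `S` under receive transitions on `a`. -/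
def postRecv {D Q : Type} (δ : Set (Q × Op D × Q)) (a : D) (S : Set Q) : Set Q :=
  {r' | ∃ r ∈ S, (r, Op.recv a, r') ∈ δ}

/-- `enabled_{?a}(S)`: states of `S` where a receive of `a` is enabled. -/
def enabledRecv {D Q : Type} (δ : Set (Q × Op D × Q)) (a : D) (S : Set Q) : Set Q :=
  {r | r ∈ S ∧ (postRecv δ a {r}).Nonempty}

/-- The edge relation `V →_G V'` of the graph `G` on tuples of subsets of `Q`. -/
def GEdge {D Q : Type} (δ : Set (Q × Op D × Q)) {m : ℕ} (V V' : Fin m → Set Q) : Prop :=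
  ∃ (a : D) (j : Fin m) (s s' : Q), s ∈ V j ∧ s' ∈ V' j ∧ (s, Op.send a, s') ∈ δ ∧
    ∃ Gen Kill : Fin m → Set Q,
      (∀ i, Gen i ⊆ postRecv δ a (V i)) ∧
      (∀ i, Kill i ⊆ enabledRecv δ a (V i)) ∧
      (∀ i, i ≠ j → V' i = (V i \ Kill i) ∪ Gen i) ∧
      (∃ U : Set Q, (U = V j ∨ U = V j \ {s}) ∧ V' j = ((U \ Kill j) ∪ Gen j) ∪ {s'}) ∧
      (∀ i, ∀ q ∈ Kill i, (postRecv δ a {q} ∩ Gen i).Nonempty)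


namespace BNProof

open Relation Finset

variable {D Q : Type}

/-- A sequence of solo broadcasts moving every process in `X` from `st` to `st'`. -/
lemma solo_sends (δ : Set (Q × Op D × Q)) {k : ℕ} (a : D) {st st' : Q}
    (hsend : (st, Op.send a, st') ∈ δ) (X : Finset (Fin k)) (c : Fin k → Q)
    (hX : ∀ p ∈ X, c p = st) :
    Relation.ReflTransGen (Step δ) c (fun p => if p ∈ X then st' else c p) := by
  classical
  revert hX
  induction X using Finset.induction_on with
  | empty =>
    intro _
    simpa using Relation.ReflTransGen.refl
  | @insert x X' hx ih =>
    intro hX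
    have h1 := ih (fun p hp => hX p (Finset.mem_insert_of_mem hp))
    refine h1.tail ⟨a, x, ∅, ?_, ?_, ?_, ?_⟩
    · simp
    · have hcx : c x = st := hX x (Finset.mem_insert_self x X')
      simp only [if_neg hx, if_pos (Finset.mem_insert_self x X'), hcx]
      exact hsend
    · intro p hp
      simp at hp
    · intro p _ hpx
      by_cases hp : p ∈ X'
      · simp [hp, Finset.mem_insert_of_mem hp]
      · have : p ∉ insert x X' := by
          simp [Finset.mem_insert, hpx, hp]
        simp [hp, this]

open scoped Classical in
noncomputable def procsAt {m k : ℕ} (β : Fin k → Fin m) (c : Fin k → Q) (i : Fin m) (q : Q) :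
    Finset (Fin k) :=
  Finset.univ.filter (fun pr => β pr = i ∧ c pr = q)

lemma mem_procsAt {m k : ℕ} {β : Fin k → Fin m} {c : Fin k → Q} {i : Fin m} {q : Q} {pr : Fin k} :
    pr ∈ procsAt β c i q ↔ β pr = i ∧ c pr = q := by
  simp [procsAt]

noncomputable def rankN {m k : ℕ} (β : Fin k → Fin m) (c : Fin k → Q) (pr : Fin k) : ℕ :=
  ((procsAt β c (β pr) (c pr)).equivFin ⟨pr, mem_procsAt.2 ⟨rfl, rfl⟩⟩ : Fin _).val

lemma rankN_eq {m k : ℕ} {β : Fin k → Fin m} {c : Fin k → Q} {i : Fin m} {q : Q} {pr : Fin k}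
    (hβ : β pr = i) (hc : c pr = q) (h : pr ∈ procsAt β c i q) :
    rankN β c pr = ((procsAt β c i q).equivFin ⟨pr, h⟩).val := by
  subst hβ; subst hc; rfl

noncomputable def prAt {m k : ℕ} (β : Fin k → Fin m) (c : Fin k → Q) (i : Fin m) (q : Q)
    (y : ℕ) (h : y < (procsAt β c i q).card) : Fin k :=
  ((procsAt β c i q).equivFin.symm ⟨y, h⟩ : {x // x ∈ procsAt β c i q})

lemma prAt_mem {m k : ℕ} (β : Fin k → Fin m) (c : Fin k → Q) (i : Fin m) (q : Q)
    (y : ℕ) (h : y < (procsAt β c i q).card) :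
    β (prAt β c i q y h) = i ∧ c (prAt β c i q y h) = q :=
  mem_procsAt.1 ((procsAt β c i q).equivFin.symm ⟨y, h⟩).property

lemma rankN_prAt {m k : ℕ} (β : Fin k → Fin m) (c : Fin k → Q) (i : Fin m) (q : Q)
    (y : ℕ) (h : y < (procsAt β c i q).card) :
    rankN β c (prAt β c i q y h) = y := by
  unfold prAt
  have hm := ((procsAt β c i q).equivFin.symm ⟨y, h⟩).property
  have h1 := rankN_eq (mem_procsAt.1 hm).1 (mem_procsAt.1 hm).2 hm
  rw [h1]
  have h2 : (⟨(((procsAt β c i q).equivFin.symm ⟨y, h⟩ : {x // x ∈ procsAt β c i q}) : Fin k), hm⟩ :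
      {x // x ∈ procsAt β c i q}) = (procsAt β c i q).equivFin.symm ⟨y, h⟩ := Subtype.ext rfl
  rw [h2, Equiv.apply_symm_apply]

lemma prAt_inj {m k : ℕ} {β : Fin k → Fin m} {c : Fin k → Q} {i : Fin m} {q : Q}
    {y y' : ℕ} {h : y < (procsAt β c i q).card} {h' : y' < (procsAt β c i q).card}
    (he : prAt β c i q y h = prAt β c i q y' h') : y = y' := by
  have := congrArg (fun z => rankN β c z) he
  simpa [rankN_prAt] using this

end BNProof

noncomputable section
namespace BNProof
open Relation Finset
open scoped Classical

variable {D Q : Type}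

noncomputable def parentOf (δ : Set (Q × Op D × Q)) (a : D) (S : Set Q) (q' : Q) : Q :=
  if h : ∃ r, r ∈ S ∧ (r, Op.recv a, q') ∈ δ then h.choose else q'

lemma parentOf_spec {δ : Set (Q × Op D × Q)} {a : D} {S : Set Q} {q' : Q}
    (h : q' ∈ postRecv δ a S) :
    parentOf δ a S q' ∈ S ∧ (parentOf δ a S q', Op.recv a, q') ∈ δ := by
  have h' : ∃ r, r ∈ S ∧ (r, Op.recv a, q') ∈ δ := h
  rw [parentOf, dif_pos h']
  exact h'.choose_spec

noncomputable def exitOf (δ : Set (Q × Op D × Q)) (a : D) (G : Set Q) (q : Q) : Q :=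
  if h : ∃ x, (q, Op.recv a, x) ∈ δ ∧ x ∈ G then h.choose else q

lemma exitOf_spec {δ : Set (Q × Op D × Q)} {a : D} {G : Set Q} {q : Q}
    (h : (postRecv δ a {q} ∩ G).Nonempty) :
    (q, Op.recv a, exitOf δ a G q) ∈ δ ∧ exitOf δ a G q ∈ G := by
  have h' : ∃ x, (q, Op.recv a, x) ∈ δ ∧ x ∈ G := by
    obtain ⟨x, hx1, hx2⟩ := h
    obtain ⟨r, hr, hrx⟩ := hx1
    rcases hr with rfl
    exact ⟨x, hrx, hx2⟩
  rw [exitOf, dif_pos h']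
  exact h'.choose_spec

noncomputable def childrenOf [Fintype Q] (δ : Set (Q × Op D × Q)) (a : D) (S G : Set Q) (q : Q) :
    Finset Q :=
  Finset.univ.filter (fun q' => q' ∈ G ∧ parentOf δ a S q' = q)

lemma mem_childrenOf [Fintype Q] {δ : Set (Q × Op D × Q)} {a : D} {S G : Set Q} {q q' : Q} :
    q' ∈ childrenOf δ a S G q ↔ q' ∈ G ∧ parentOf δ a S q' = q := by
  simp [childrenOf]

lemma card_childrenOf_le [Fintype Q] (δ : Set (Q × Op D × Q)) (a : D) (S G : Set Q) (q : Q) :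
    (childrenOf δ a S G q).card ≤ Fintype.card Q := by
  simpa [childrenOf] using Finset.card_le_card (Finset.filter_subset _ (Finset.univ : Finset Q))

noncomputable def childAt [Fintype Q] (δ : Set (Q × Op D × Q)) (a : D) (S G : Set Q) (q : Q)
    (y : ℕ) : Q :=
  if h : y < (childrenOf δ a S G q).card
  then (((childrenOf δ a S G q).equivFin.symm ⟨y, h⟩ : {x // x ∈ childrenOf δ a S G q}) : Q)
  else q

noncomputable def targetOf [Fintype Q] {m k : ℕ} (δ : Set (Q × Op D × Q)) (a : D) (n : ℕ)
    (j : Fin m) (s s' : Q) (V V' Gen : Fin m → Set Q) (β : Fin k → Fin m) (c : Fin k → Q)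
    (pr : Fin k) : Q :=
  if rankN β c pr < n * (childrenOf δ a (V (β pr)) (Gen (β pr)) (c pr)).card then
    childAt δ a (V (β pr)) (Gen (β pr)) (c pr) (rankN β c pr / n)
  else if β pr = j ∧ c pr = s ∧
      (rankN β c pr < n * (childrenOf δ a (V (β pr)) (Gen (β pr)) (c pr)).card + n ∨ s ∉ V' j) then
    s'
  else if c pr ∈ V' (β pr) then c pr
  else exitOf δ a (Gen (β pr)) (c pr)

noncomputable def senderSet [Fintype Q] {m k : ℕ} (δ : Set (Q × Op D × Q)) (a : D) (n : ℕ)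
    (j : Fin m) (s : Q) (V V' Gen : Fin m → Set Q) (β : Fin k → Fin m) (c : Fin k → Q) :
    Finset (Fin k) :=
  Finset.univ.filter (fun pr =>
    β pr = j ∧ c pr = s ∧
    ¬ (rankN β c pr < n * (childrenOf δ a (V (β pr)) (Gen (β pr)) (c pr)).card) ∧
    (rankN β c pr < n * (childrenOf δ a (V (β pr)) (Gen (β pr)) (c pr)).card + n ∨ s ∉ V' j))

lemma mem_senderSet [Fintype Q] {m k : ℕ} {δ : Set (Q × Op D × Q)} {a : D} {n : ℕ}
    {j : Fin m} {s : Q} {V V' Gen : Fin m → Set Q} {β : Fin k → Fin m} {c : Fin k → Q}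
    {pr : Fin k} :
    pr ∈ senderSet δ a n j s V V' Gen β c ↔
      β pr = j ∧ c pr = s ∧
      ¬ (rankN β c pr < n * (childrenOf δ a (V (β pr)) (Gen (β pr)) (c pr)).card) ∧
      (rankN β c pr < n * (childrenOf δ a (V (β pr)) (Gen (β pr)) (c pr)).card + n ∨ s ∉ V' j) := by
  simp only [senderSet, Finset.mem_filter, Finset.mem_univ, true_and]

end BNProof
end

namespace BNProof
open Relation Finset
open scoped Classical

variable {D Q : Type}

lemma step_sim [Fintype Q] (δ : Set (Q × Op D × Q)) {m : ℕ} {V V' : Fin m → Set Q}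
    (hE : GEdge δ V V') {k n : ℕ} (hn : 1 ≤ n) (β : Fin k → Fin m) (c : Fin k → Q)
    (hc : ∀ p, c p ∈ V (β p))
    (hM : ∀ i q, q ∈ V i → n * (Fintype.card Q + 2) ≤ (procsAt β c i q).card) :
    ∃ c' : Fin k → Q, (∀ p, c' p ∈ V' (β p)) ∧
      (∀ i q', q' ∈ V' i → n ≤ (procsAt β c' i q').card) ∧
      Relation.TransGen (Step δ) c c' := by
  classical
  obtain ⟨a, j, s, s', hsV, hs'V, hsend, Gen, Kill, hGen, hKill, hVi, ⟨U, hU, hVj⟩, h3⟩ := hE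
  set N := Fintype.card Q with hN
  have hn0 : 0 < n := hn
  set T : Fin k → Q := targetOf δ a n j s s' V V' Gen β c with hTdef
  have hGenV' : ∀ i, Gen i ⊆ V' i := by
    intro i
    by_cases hij : i = j
    · subst hij; rw [hVj]; intro x hx; exact Or.inl (Or.inr hx)
    · rw [hVi i hij]; intro x hx; exact Or.inr hx
  -- supplier branch facts
  have hsup_spec : ∀ pr,
      rankN β c pr < n * (childrenOf δ a (V (β pr)) (Gen (β pr)) (c pr)).card →
      T pr ∈ Gen (β pr) ∧ (c pr, Op.recv a, T pr) ∈ δ := by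
    intro pr hsup
    have hT : T pr = childAt δ a (V (β pr)) (Gen (β pr)) (c pr) (rankN β c pr / n) := by
      rw [hTdef]
      simp only [targetOf]
      rw [if_pos hsup]
    have hdiv : rankN β c pr / n < (childrenOf δ a (V (β pr)) (Gen (β pr)) (c pr)).card := by
      rw [Nat.div_lt_iff_lt_mul hn0]
      exact (Nat.mul_comm n _) ▸ hsup
    rw [hT, childAt, dif_pos hdiv]
    have hm := ((childrenOf δ a (V (β pr)) (Gen (β pr)) (c pr)).equivFin.symm
      ⟨rankN β c pr / n, hdiv⟩).property
    rw [mem_childrenOf] at hm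
    obtain ⟨hg, hpar⟩ := hm
    have hps := parentOf_spec (hGen (β pr) hg)
    have hps2 := hps.2
    rw [hpar] at hps2
    exact ⟨hg, hps2⟩
  -- kill membership derivation
  have hkill_of : ∀ (i : Fin m) (q : Q), q ∈ V i → q ∉ V' i → ¬(i = j ∧ q = s) → q ∈ Kill i := by
    intro i q hqV hnv hns
    by_cases hij : i = j
    · subst hij
      have hqs : q ≠ s := fun h => hns ⟨rfl, h⟩
      have hqU : q ∈ U := by
        rcases hU with h | h
        · rw [h]; exact hqV
        · rw [h]; exact ⟨hqV, hqs⟩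
      by_contra hk
      exact hnv (hVj ▸ (Or.inl (Or.inl ⟨hqU, hk⟩)))
    · by_contra hk
      exact hnv ((hVi i hij) ▸ (Or.inl ⟨hqV, hk⟩))
  have hb2' : ∀ pr, ¬(β pr = j ∧ c pr = s ∧
        (rankN β c pr < n * (childrenOf δ a (V (β pr)) (Gen (β pr)) (c pr)).card + n ∨ s ∉ V' j)) →
      c pr ∉ V' (β pr) → ¬(β pr = j ∧ c pr = s) := by
    intro pr hb2 hnv h
    obtain ⟨h1, h2⟩ := h
    exact hb2 ⟨h1, h2, Or.inr (fun hsv => hnv (by rw [h1, h2]; exact hsv))⟩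
  -- non-supplier, non-sender classification
  have hTstay : ∀ pr,
      ¬ (rankN β c pr < n * (childrenOf δ a (V (β pr)) (Gen (β pr)) (c pr)).card) →
      ¬(β pr = j ∧ c pr = s ∧
        (rankN β c pr < n * (childrenOf δ a (V (β pr)) (Gen (β pr)) (c pr)).card + n ∨ s ∉ V' j)) →
      (c pr ∈ V' (β pr) → T pr = c pr) ∧
      (c pr ∉ V' (β pr) →
        T pr = exitOf δ a (Gen (β pr)) (c pr) ∧ c pr ∈ Kill (β pr)) := by
    intro pr hnsup hb2
    constructor
    · intro hst
      rw [hTdef]; simp only [targetOf]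
      rw [if_neg hnsup, if_neg hb2, if_pos hst]
    · intro hnv
      have hkm : c pr ∈ Kill (β pr) := hkill_of (β pr) (c pr) (hc pr) hnv (hb2' pr hb2 hnv)
      constructor
      · rw [hTdef]; simp only [targetOf]
        rw [if_neg hnsup, if_neg hb2, if_neg hnv]
      · exact hkm
  -- sender set
  set X : Finset (Fin k) := senderSet δ a n j s V V' Gen β c with hXdef
  have hXc : ∀ pr ∈ X, c pr = s := by
    intro pr hpr
    rw [hXdef, mem_senderSet] at hpr
    exact hpr.2.1
  have hTX : ∀ pr ∈ X, T pr = s' := by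
    intro pr hpr
    rw [hXdef, mem_senderSet] at hpr
    obtain ⟨h1, h2, h3', h4⟩ := hpr
    rw [hTdef]; simp only [targetOf]
    rw [if_neg h3', if_pos ⟨h1, h2, h4⟩]
  -- bounds
  have hbound : ∀ (i : Fin m) (q : Q), q ∈ V i →
      n * (childrenOf δ a (V i) (Gen i) q).card + 2 * n ≤ (procsAt β c i q).card := by
    intro i q hq
    have h1 : (childrenOf δ a (V i) (Gen i) q).card ≤ N := card_childrenOf_le _ _ _ _ _
    have h2 := hM i q hq
    have h4 : n * (N + 2) = n * N + 2 * n := by ring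
    have h5 : n * (childrenOf δ a (V i) (Gen i) q).card ≤ n * N := Nat.mul_le_mul_left n h1
    omega
  -- the distinguished sender p₀
  have h0 : n * (childrenOf δ a (V j) (Gen j) s).card < (procsAt β c j s).card := by
    have := hbound j s hsV
    omega
  set p₀ : Fin k := prAt β c j s (n * (childrenOf δ a (V j) (Gen j) s).card) h0 with hp₀def
  have hp₀β : β p₀ = j := (prAt_mem β c j s _ h0).1
  have hp₀c : c p₀ = s := (prAt_mem β c j s _ h0).2
  have hp₀r : rankN β c p₀ = n * (childrenOf δ a (V j) (Gen j) s).card := rankN_prAt β c j s _ h0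
  have hp₀X : p₀ ∈ X := by
    rw [hXdef, mem_senderSet, hp₀β, hp₀c, hp₀r]
    exact ⟨rfl, rfl, lt_irrefl _, Or.inl (Nat.lt_add_of_pos_right hn0)⟩
  -- solo sends chain
  set c₁ : Fin k → Q := fun p => if p ∈ X.erase p₀ then s' else c p with hc₁def
  have hchain : Relation.ReflTransGen (Step δ) c c₁ :=
    solo_sends δ a hsend (X.erase p₀) c (fun p hp => hXc p (Finset.mem_of_mem_erase hp))
  -- final step
  set R : Set (Fin k) := {pr | pr ∉ X ∧ T pr ≠ c pr} with hRdef
  have hfinal : Step δ c₁ T := by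
    refine ⟨a, p₀, R, ?_, ?_, ?_, ?_⟩
    · intro h
      exact h.1 hp₀X
    · have h1 : c₁ p₀ = c p₀ := by
        rw [hc₁def]; simp [Finset.notMem_erase p₀ X]
      rw [h1, hp₀c, hTX p₀ hp₀X]
      exact hsend
    · intro pr hpr
      obtain ⟨hnX, hne⟩ := hpr
      have h1 : c₁ pr = c pr := by
        rw [hc₁def]
        have : pr ∉ X.erase p₀ := fun h => hnX (Finset.mem_of_mem_erase h)
        simp [this]
      rw [h1]
      by_cases hsup : rankN β c pr < n * (childrenOf δ a (V (β pr)) (Gen (β pr)) (c pr)).card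
      · exact (hsup_spec pr hsup).2
      · by_cases hb2 : β pr = j ∧ c pr = s ∧
            (rankN β c pr < n * (childrenOf δ a (V (β pr)) (Gen (β pr)) (c pr)).card + n ∨ s ∉ V' j)
        · exact absurd (by rw [hXdef, mem_senderSet]; exact ⟨hb2.1, hb2.2.1, hsup, hb2.2.2⟩) hnX
        · have hcl := hTstay pr hsup hb2
          by_cases hst : c pr ∈ V' (β pr)
          · exact absurd (hcl.1 hst) hne
          · obtain ⟨hTe, hkm⟩ := hcl.2 hst
            rw [hTe]
            exact (exitOf_spec (h3 (β pr) (c pr) hkm)).1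
    · intro pr hnR hnp₀
      by_cases hX' : pr ∈ X
      · have h1 : c₁ pr = s' := by
          rw [hc₁def]
          simp [Finset.mem_erase, hnp₀, hX']
        rw [h1, hTX pr hX']
      · have hTc : T pr = c pr := by
          by_contra hne
          exact hnR ⟨hX', hne⟩
        have h1 : c₁ pr = c pr := by
          rw [hc₁def]
          have : pr ∉ X.erase p₀ := fun h => hX' (Finset.mem_of_mem_erase h)
          simp [this]
        rw [hTc, h1]
  have hrun : Relation.TransGen (Step δ) c T := Relation.TransGen.tail' hchain hfinal
  -- realization
  have hreal : ∀ pr, T pr ∈ V' (β pr) := by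
    intro pr
    by_cases hsup : rankN β c pr < n * (childrenOf δ a (V (β pr)) (Gen (β pr)) (c pr)).card
    · exact hGenV' (β pr) (hsup_spec pr hsup).1
    · by_cases hb2 : β pr = j ∧ c pr = s ∧
          (rankN β c pr < n * (childrenOf δ a (V (β pr)) (Gen (β pr)) (c pr)).card + n ∨ s ∉ V' j)
      · have hT : T pr = s' := by
          rw [hTdef]; simp only [targetOf]; rw [if_neg hsup, if_pos hb2]
        rw [hT, hb2.1]
        exact hs'V
      · by_cases hst : c pr ∈ V' (β pr)
        · rw [(hTstay pr hsup hb2).1 hst]; exact hst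
        · obtain ⟨hTe, hkm⟩ := (hTstay pr hsup hb2).2 hst
          rw [hTe]
          exact hGenV' (β pr) (exitOf_spec (h3 (β pr) (c pr) hkm)).2
  -- count helper
  have count_helper : ∀ (i : Fin m) (q τ : Q) (A : ℕ), q ∈ V i →
      A + n ≤ (procsAt β c i q).card →
      (∀ pr, β pr = i → c pr = q → A ≤ rankN β c pr → rankN β c pr < A + n → T pr = τ) →
      n ≤ (procsAt β T i τ).card := by
    intro i q τ A hqV hA hall
    have hlt : ∀ x : Fin n, A + x.val < (procsAt β c i q).card :=
      fun x => lt_of_lt_of_le (Nat.add_lt_add_left x.isLt A) hA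
    have hle : (Finset.univ : Finset (Fin n)).card ≤ (procsAt β T i τ).card := by
      refine Finset.card_le_card_of_injOn (fun x => prAt β c i q (A + x.val) (hlt x)) ?_ ?_
      · intro x _
        rw [Finset.mem_coe, mem_procsAt]
        refine ⟨(prAt_mem β c i q _ (hlt x)).1, ?_⟩
        exact hall _ (prAt_mem β c i q _ (hlt x)).1 (prAt_mem β c i q _ (hlt x)).2
          (by rw [rankN_prAt]; omega) (by rw [rankN_prAt]; exact Nat.add_lt_add_left x.isLt A)
      · intro x _ y _ hxy
        have h1 := prAt_inj hxy
        exact Fin.ext (by omega)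
    simpa using hle
  refine ⟨T, hreal, ?_, hrun⟩
  intro i q' hq'
  have hq'2 := hq'
  by_cases hg : q' ∈ Gen i
  · -- generated states: suppliers
    have hps := parentOf_spec (hGen i hg)
    set p := parentOf δ a (V i) q' with hpdef
    have hmemc : q' ∈ childrenOf δ a (V i) (Gen i) p := mem_childrenOf.2 ⟨hg, rfl⟩
    set e := (childrenOf δ a (V i) (Gen i) p).equivFin with hedef
    set y : ℕ := ((e ⟨q', hmemc⟩ : Fin _) : ℕ) with hydef
    have hyκ : y < (childrenOf δ a (V i) (Gen i) p).card := (e ⟨q', hmemc⟩).isLt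
    have hwin : n * y + n ≤ n * (childrenOf δ a (V i) (Gen i) p).card := by
      have h1 : y + 1 ≤ (childrenOf δ a (V i) (Gen i) p).card := hyκ
      calc n * y + n = n * (y + 1) := by ring
      _ ≤ n * (childrenOf δ a (V i) (Gen i) p).card := Nat.mul_le_mul_left n h1
    refine count_helper i p q' (n * y) hps.1 ?_ ?_
    · have h1 := hbound i p hps.1
      omega
    · intro pr hβ hcp hge hlt2
      have hsup : rankN β c pr < n * (childrenOf δ a (V (β pr)) (Gen (β pr)) (c pr)).card := by
        rw [hβ, hcp]
        omega
      have hT : T pr = childAt δ a (V (β pr)) (Gen (β pr)) (c pr) (rankN β c pr / n) := by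
        rw [hTdef]; simp only [targetOf]; rw [if_pos hsup]
      have hdiveq : rankN β c pr / n = y := by
        apply Nat.div_eq_of_lt_le
        · calc y * n = n * y := Nat.mul_comm _ _
          _ ≤ rankN β c pr := hge
        · calc rankN β c pr < n * y + n := hlt2
          _ = (y + 1) * n := by ring
      rw [hT, hβ, hcp, hdiveq, childAt, dif_pos hyκ]
      have h2 : (⟨y, hyκ⟩ : Fin (childrenOf δ a (V i) (Gen i) p).card) = e ⟨q', hmemc⟩ :=
        Fin.ext rfl
      rw [h2, hedef, Equiv.symm_apply_apply]
  · by_cases hjs' : i = j ∧ q' = s'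
    · -- the send target
      obtain ⟨rfl, rfl⟩ := hjs'
      refine count_helper i s q' (n * (childrenOf δ a (V i) (Gen i) s).card) hsV ?_ ?_
      · have h1 := hbound i s hsV
        omega
      · intro pr hβ hcp hge hlt2
        have hκeq : (childrenOf δ a (V (β pr)) (Gen (β pr)) (c pr)).card
            = (childrenOf δ a (V i) (Gen i) s).card := by rw [hβ, hcp]
        have hnsup : ¬ (rankN β c pr <
            n * (childrenOf δ a (V (β pr)) (Gen (β pr)) (c pr)).card) := by
          rw [hκeq]; omega
        have hb2 : β pr = i ∧ c pr = s ∧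
            (rankN β c pr < n * (childrenOf δ a (V (β pr)) (Gen (β pr)) (c pr)).card + n
              ∨ s ∉ V' i) :=
          ⟨hβ, hcp, Or.inl (by rw [hκeq]; omega)⟩
        rw [hTdef]; simp only [targetOf]; rw [if_neg hnsup, if_pos hb2]
    · -- surviving states: stayers
      have hq'V : q' ∈ V i := by
        by_cases hij : i = j
        · subst hij
          rw [hVj] at hq'
          rcases hq' with (h | h) | h
          · rcases hU with h2 | h2
            · rw [h2] at h; exact h.1
            · rw [h2] at h; exact h.1.1
          · exact absurd h hg
          · exact absurd ⟨rfl, Set.mem_singleton_iff.mp h⟩ hjs'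
        · rw [hVi i hij] at hq'
          rcases hq' with h | h
          · exact h.1
          · exact absurd h hg
      by_cases hqs : i = j ∧ q' = s
      · obtain ⟨hij, hq's⟩ := hqs
        refine count_helper i q' q' (n * (childrenOf δ a (V i) (Gen i) q').card + n) hq'V ?_ ?_
        · have h1 := hbound i q' hq'V
          omega
        · intro pr hβ hcp hge hlt2
          have hκeq : (childrenOf δ a (V (β pr)) (Gen (β pr)) (c pr)).card
              = (childrenOf δ a (V i) (Gen i) q').card := by rw [hβ, hcp]
          have hnsup : ¬ (rankN β c pr <
              n * (childrenOf δ a (V (β pr)) (Gen (β pr)) (c pr)).card) := by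
            rw [hκeq]; omega
          have hb2 : ¬ (β pr = j ∧ c pr = s ∧
              (rankN β c pr < n * (childrenOf δ a (V (β pr)) (Gen (β pr)) (c pr)).card + n
                ∨ s ∉ V' j)) := by
            rintro ⟨h1, h2, h4 | h4⟩
            · rw [hκeq] at h4
              omega
            · exact h4 (by rw [← hij, ← hq's]; exact hq'2)
          rw [hTdef]; simp only [targetOf]
          rw [if_neg hnsup, if_neg hb2, if_pos (show c pr ∈ V' (β pr) by rw [hβ, hcp]; exact hq'2)]
          exact hcp
      · refine count_helper i q' q' (n * (childrenOf δ a (V i) (Gen i) q').card) hq'V ?_ ?_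
        · have h1 := hbound i q' hq'V
          omega
        · intro pr hβ hcp hge hlt2
          have hκeq : (childrenOf δ a (V (β pr)) (Gen (β pr)) (c pr)).card
              = (childrenOf δ a (V i) (Gen i) q').card := by rw [hβ, hcp]
          have hnsup : ¬ (rankN β c pr <
              n * (childrenOf δ a (V (β pr)) (Gen (β pr)) (c pr)).card) := by
            rw [hκeq]; omega
          have hb2 : ¬ (β pr = j ∧ c pr = s ∧
              (rankN β c pr < n * (childrenOf δ a (V (β pr)) (Gen (β pr)) (c pr)).card + n
                ∨ s ∉ V' j)) := by
            rintro ⟨h1, h2, _⟩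
            rw [hβ] at h1
            rw [hcp] at h2
            exact hqs ⟨h1, h2⟩
          rw [hTdef]; simp only [targetOf]
          rw [if_neg hnsup, if_neg hb2, if_pos (show c pr ∈ V' (β pr) by rw [hβ, hcp]; exact hq'2)]
          exact hcp

end BNProof

namespace BNProof
open Relation Finset
open scoped Classical

variable {D Q : Type}

lemma init_real [Fintype Q] {m : ℕ} (s : Fin m → Q) (M : ℕ) :
    ∃ (k : ℕ) (β : Fin k → Fin m), ∀ i,
      M ≤ (procsAt β (fun p => s (β p)) i (s i)).card := by
  classical
  set E := (@finProdFinEquiv m M) with hE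
  refine ⟨m * M, fun p => (E.symm p).1, fun i => ?_⟩
  have hle : (Finset.univ : Finset (Fin M)).card ≤
      (procsAt (fun p => (E.symm p).1)
        (fun p => s ((E.symm p).1)) i (s i)).card := by
    refine Finset.card_le_card_of_injOn (fun x => E (i, x)) ?_ ?_
    · intro x _
      rw [Finset.mem_coe, mem_procsAt]
      simp
    · intro x _ y _ hxy
      have h2 := E.injective hxy
      exact ((Prod.mk.injEq _ _ _ _).mp h2).2
  simpa using hle

lemma forward_aux [Fintype Q] (δ : Set (Q × Op D × Q)) {m : ℕ} (s : Fin m → Q)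
    {W : Fin m → Set Q}
    (h : Relation.TransGen (GEdge δ) (fun i => ({s i} : Set Q)) W) :
    ∀ n, 1 ≤ n → ∃ (k : ℕ) (β : Fin k → Fin m) (cW : Fin k → Q),
      (∀ p, cW p ∈ W (β p)) ∧
      (∀ i q, q ∈ W i → n ≤ (procsAt β cW i q).card) ∧
      Relation.TransGen (Step δ) (fun p => s (β p)) cW := by
  induction h with
  | single hE =>
    intro n hn
    obtain ⟨k, β, hinit⟩ := init_real s (n * (Fintype.card Q + 2))
    have hc : ∀ p, (fun p => s (β p)) p ∈ (fun i => ({s i} : Set Q)) (β p) := fun p => rfl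
    have hMM : ∀ i q, q ∈ (fun i => ({s i} : Set Q)) i →
        n * (Fintype.card Q + 2) ≤ (procsAt β (fun p => s (β p)) i q).card := by
      intro i q hq
      rcases hq with rfl
      exact hinit i
    obtain ⟨cW, g1, g2, g3⟩ := step_sim δ hE hn β (fun p => s (β p)) hc hMM
    exact ⟨k, β, cW, g1, g2, g3⟩
  | tail hT hE ih =>
    intro n hn
    obtain ⟨k, β, cP, h1, h2, h3⟩ := ih (n * (Fintype.card Q + 2))
      (le_trans hn (Nat.le_mul_of_pos_right n (by omega)))
    obtain ⟨cW, g1, g2, g3⟩ := step_sim δ hE hn β cP h1 h2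
    exact ⟨k, β, cW, g1, g2, h3.trans g3⟩

lemma forward [Fintype Q] (δ : Set (Q × Op D × Q)) {m : ℕ} (s : Fin m → Q)
    (h : Relation.TransGen (GEdge δ) (fun i => ({s i} : Set Q)) (fun i => {s i})) :
    ∃ (k : ℕ) (c : Fin k → Q), Set.range c = Set.range s ∧
      Relation.TransGen (Step δ) c c := by
  obtain ⟨k, β, cW, h1, h2, h3⟩ := forward_aux δ s h 1 le_rfl
  have hcw : cW = fun p => s (β p) := funext fun p => h1 p
  rw [hcw] at h3
  refine ⟨k, fun p => s (β p), ?_, h3⟩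
  ext x
  constructor
  · rintro ⟨p, rfl⟩
    exact ⟨β p, rfl⟩
  · rintro ⟨i, rfl⟩
    have := h2 i (s i) rfl
    have hne : (procsAt β cW i (s i)).Nonempty := Finset.card_pos.mp (by omega)
    obtain ⟨pr, hpr⟩ := hne
    rw [mem_procsAt] at hpr
    exact ⟨pr, by show s (β pr) = s i; rw [hpr.1]⟩

end BNProof

namespace BNProof
open Relation Finset

variable {D Q : Type}

lemma step_to_gedge {m k : ℕ} (δ : Set (Q × Op D × Q)) (β : Fin k → Fin m)
    {d d' : Fin k → Q} (h : Step δ d d') :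
    GEdge δ (fun i => {x | ∃ p, β p = i ∧ d p = x})
      (fun i => {x | ∃ p, β p = i ∧ d' p = x}) := by
  classical
  obtain ⟨a, i₀, R, hiR, hsend, hrecv, hidle⟩ := h
  refine ⟨a, β i₀, d i₀, d' i₀, ⟨i₀, rfl, rfl⟩, ⟨i₀, rfl, rfl⟩, hsend,
    (fun i => {x | ∃ p, p ∈ R ∧ β p = i ∧ d' p = x}),
    (fun i => {q | (∃ p, β p = i ∧ d p = q) ∧ ¬(∃ p, β p = i ∧ d' p = q) ∧
      ¬(i = β i₀ ∧ q = d i₀)}),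
    ?_, ?_, ?_, ?_, ?_⟩
  · -- Gen ⊆ postRecv
    rintro i x ⟨p, hpR, hβ, rfl⟩
    exact ⟨d p, ⟨p, hβ, rfl⟩, hrecv p hpR⟩
  · -- Kill ⊆ enabledRecv
    rintro i q ⟨⟨p, hβ, hdp⟩, hnd', hn3⟩
    have hpR : p ∈ R := by
      by_cases hp₀ : p = i₀
      · exfalso
        exact hn3 ⟨by rw [← hp₀, hβ], by rw [← hp₀, hdp]⟩
      · by_contra hnR
        exact hnd' ⟨p, hβ, by rw [hidle p hnR hp₀]; exact hdp⟩
    refine ⟨⟨p, hβ, hdp⟩, ⟨d' p, q, rfl, ?_⟩⟩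
    rw [← hdp]
    exact hrecv p hpR
  · -- i ≠ j equation
    intro i hij
    ext x
    constructor
    · rintro ⟨p, hβ, rfl⟩
      by_cases hpR : p ∈ R
      · exact Or.inr ⟨p, hpR, hβ, rfl⟩
      · have hp₀ : p ≠ i₀ := fun h => hij (h ▸ hβ ▸ rfl)
        have hid := hidle p hpR hp₀
        refine Or.inl ⟨⟨p, hβ, hid.symm⟩, fun hk => hk.2.1 ⟨p, hβ, rfl⟩⟩
    · rintro (⟨hAd, hnk⟩ | ⟨p, hpR, hβ, rfl⟩)
      · by_contra hng
        exact hnk ⟨hAd, hng, fun hc => hij hc.1⟩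
      · exact ⟨p, hβ, rfl⟩
  · -- block j equation
    by_cases hsv : ∃ p, β p = β i₀ ∧ d' p = d i₀
    · refine ⟨{x | ∃ p, β p = β i₀ ∧ d p = x}, Or.inl rfl, ?_⟩
      ext x
      constructor
      · rintro ⟨p, hβ, rfl⟩
        by_cases hp₀ : p = i₀
        · subst hp₀
          exact Or.inr rfl
        · by_cases hpR : p ∈ R
          · exact Or.inl (Or.inr ⟨p, hpR, hβ, rfl⟩)
          · have hid := hidle p hpR hp₀
            exact Or.inl (Or.inl ⟨⟨p, hβ, hid.symm⟩, fun hk => hk.2.1 ⟨p, hβ, rfl⟩⟩)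
      · rintro ((⟨hAd, hnk⟩ | ⟨p, hpR, hβ, rfl⟩) | hx)
        · by_cases hB : ∃ p, β p = β i₀ ∧ d' p = x
          · exact hB
          · have hxs : x = d i₀ := by
              by_contra hx
              exact hnk ⟨hAd, hB, fun hc => hx hc.2⟩
            rw [hxs]
            exact hsv
        · exact ⟨p, hβ, rfl⟩
        · rw [Set.mem_singleton_iff] at hx
          exact ⟨i₀, rfl, hx.symm⟩
    · refine ⟨{x | ∃ p, β p = β i₀ ∧ d p = x} \ {d i₀}, Or.inr rfl, ?_⟩
      ext x
      constructor
      · rintro ⟨p, hβ, rfl⟩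
        by_cases hp₀ : p = i₀
        · subst hp₀
          exact Or.inr rfl
        · by_cases hpR : p ∈ R
          · exact Or.inl (Or.inr ⟨p, hpR, hβ, rfl⟩)
          · have hid := hidle p hpR hp₀
            have hxne : d' p ≠ d i₀ := fun h => hsv ⟨p, hβ, h⟩
            exact Or.inl (Or.inl ⟨⟨⟨p, hβ, hid.symm⟩, hxne⟩, fun hk => hk.2.1 ⟨p, hβ, rfl⟩⟩)
      · rintro ((⟨⟨hAd, hne⟩, hnk⟩ | ⟨p, hpR, hβ, rfl⟩) | hx)
        · by_contra hB
          exact hnk ⟨hAd, hB, fun hc => hne hc.2⟩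
        · exact ⟨p, hβ, rfl⟩
        · rw [Set.mem_singleton_iff] at hx
          exact ⟨i₀, rfl, hx.symm⟩
  · -- condition (3)
    rintro i q ⟨⟨p, hβ, hdp⟩, hnd', hn3⟩
    have hpR : p ∈ R := by
      by_cases hp₀ : p = i₀
      · exfalso
        exact hn3 ⟨by rw [← hp₀, hβ], by rw [← hp₀, hdp]⟩
      · by_contra hnR
        exact hnd' ⟨p, hβ, by rw [hidle p hnR hp₀]; exact hdp⟩
    refine ⟨d' p, ⟨q, rfl, ?_⟩, ⟨p, hpR, hβ, rfl⟩⟩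
    rw [← hdp]
    exact hrecv p hpR

lemma backward (δ : Set (Q × Op D × Q)) {m : ℕ} (s : Fin m → Q) (hs : Function.Injective s)
    {k : ℕ} {c : Fin k → Q} (hr : Set.range c = Set.range s)
    (hrun : Relation.TransGen (Step δ) c c) :
    Relation.TransGen (GEdge δ) (fun i => ({s i} : Set Q)) (fun i => {s i}) := by
  classical
  have hmem : ∀ p, ∃ i, s i = c p := by
    intro p
    have h1 : c p ∈ Set.range s := hr ▸ Set.mem_range_self p
    obtain ⟨i, hi⟩ := h1
    exact ⟨i, hi⟩
  choose β hβ using hmem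
  have hlift := Relation.TransGen.lift (fun (d : Fin k → Q) => fun i => {x | ∃ p, β p = i ∧ d p = x})
    (fun d d' hst => step_to_gedge δ β hst) _ _ hrun
  have hAc : (fun i => {x | ∃ p, β p = i ∧ c p = x}) = (fun i => ({s i} : Set Q)) := by
    funext i
    ext x
    constructor
    · rintro ⟨p, rfl, rfl⟩
      rw [Set.mem_singleton_iff]
      exact (hβ p).symm
    · intro hx
      rw [Set.mem_singleton_iff] at hx
      subst hx
      have h1 : s i ∈ Set.range c := by
        rw [hr]
        exact ⟨i, rfl⟩
      obtain ⟨p, hp⟩ := h1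
      have hbi : β p = i := hs (by rw [hβ p, hp])
      exact ⟨p, hbi, hp⟩
  have hlift' : Relation.TransGen (GEdge δ) (fun i => {x | ∃ p, β p = i ∧ c p = x})
      (fun i => {x | ∃ p, β p = i ∧ c p = x}) := hlift
  rw [hAc] at hlift'
  exact hlift'

end BNProof


/-- Lemma 3: For pairwise distinct states `s 0, …, s (m-1)`, there is a cycle
`({s 0}, …, {s (m-1)}) →_G⁺ ({s 0}, …, {s (m-1)})` in the graph `G` iff there is a
configuration `c` with `Set(c) = {s 0, …, s (m-1)}` and `c →⁺ c` in the broadcast network. -/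
theorem graph_cycle_iff_config_cycle {D Q : Type} [Fintype Q] (δ : Set (Q × Op D × Q))
    {m : ℕ} (s : Fin m → Q) (hs : Function.Injective s) :
    Relation.TransGen (GEdge δ) (fun i => ({s i} : Set Q)) (fun i => {s i}) ↔
    ∃ (k : ℕ) (c : Fin k → Q), Set.range c = Set.range s ∧
      Relation.TransGen (Step δ) c c := by
  
  constructor
  · intro h
    exact BNProof.forward δ s h
  · rintro ⟨k, c, hr, hrun⟩
    exact BNProof.backward δ s hs hr hrun
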